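/- Let M be a completely specified deterministic prime FSM, R = R(q1,x1,Z1) ∧ … ∧ R(qk,xk,Zk) a composite requirement on M, and M1' the induced nondeterministic abstraction. Then for any completely specified DFSM S over the same alphabets: S ⊨ R if and only if L(S) ⊆ L(M1'). -/
import Mathlib


def dAfter {Q I : Type*} (δ : Q → I → Q) : Q → List I → Q
  | q, [] => q
  | q, x :: xs => dAfter δ (δ q x) xs

def oOut {Q I O : Type*} (δ : Q → I → Q) (ω : Q → I → O) : Q → List I → List O
  | _, [] => []
  | q, x :: xs => ω q x :: oOut δ ω (δ q x) xs

/-- Membership of an I/O-trace in the language of a state of an FSM. -/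
def inLang {Q I O : Type*} (h : Q → I → O → Q → Prop) : Q → List (I × O) → Prop
  | _, [] => True
  | q, p :: τ => ∃ q', h q p.1 p.2 q' ∧ inLang h q' τ

/-- Admissible output set of the abstraction M1' at (q,x): Z_i at requirement pairs,
all of Σ_O elsewhere. -/
def reqOut {Q I O : Type*} {k : ℕ} (qr : Fin k → Q) (xr : Fin k → I)
    (Zr : Fin k → Set O) (q : Q) (x : I) : Set O :=
  {y | ∀ i, qr i = q → xr i = x → y ∈ Zr i}

/-- Transition relation of M1'. -/
def m1'Rel {Q I O : Type*} (δ : Q → I → Q) (ω1 : Q → I → Set O)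
    (q : Q) (x : I) (y : O) (q' : Q) : Prop :=
  q' = δ q x ∧ y ∈ ω1 q x

/-- Transition relation of a completely specified DFSM given by δ and ω. -/
def dfsmRel {Q I O : Type*} (δ : Q → I → Q) (ω : Q → I → O)
    (q : Q) (x : I) (y : O) (q' : Q) : Prop :=
  y = ω q x ∧ q' = δ q x

def sTrace {Q I O : Type*} (δ : Q → I → Q) (ω : Q → I → O) : Q → List I → List (I × O)
  | _, [] => []
  | q, x :: xs => (x, ω q x) :: sTrace δ ω (δ q x) xs

lemma dAfter_append {Q I : Type*} (δ : Q → I → Q) (q : Q) (π ρ : List I) :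
    dAfter δ q (π ++ ρ) = dAfter δ (dAfter δ q π) ρ := by
  induction π generalizing q with
  | nil => rfl
  | cons p π ih => simp [dAfter, ih]

lemma sTrace_inLang {Q I O : Type*} (δ : Q → I → Q) (ω : Q → I → O) (q : Q) (xs : List I) :
    inLang (dfsmRel δ ω) q (sTrace δ ω q xs) := by
  induction xs generalizing q with
  | nil => trivial
  | cons x xs ih => exact ⟨δ q x, ⟨rfl, rfl⟩, ih _⟩


/-- S ⊨ R ⟺ L(S) ⊆ L(M1'), for M a completely specified deterministic prime
FSM (primeness expressed as reachability plus distinguishability) with composite requirement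
R = ⋀ R(q_i,x_i,Z_i), and S a completely specified DFSM over the same alphabets. -/
theorem stmt_12 {Q S I O : Type*}
    (δM : Q → I → Q) (ωM : Q → I → O) (q0 : Q)
    (hMreach : ∀ q : Q, ∃ π : List I, dAfter δM q0 π = q)
    (hMdist : ∀ q q' : Q, (∀ xs : List I, oOut δM ωM q xs = oOut δM ωM q' xs) → q = q')
    (k : ℕ) (qr : Fin k → Q) (xr : Fin k → I) (Zr : Fin k → Set O)
    (hZ : ∀ i, ωM (qr i) (xr i) ∈ Zr i)
    (hWD : ∀ i j, qr i = qr j → xr i = xr j → Zr i = Zr j)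
    (δS : S → I → S) (ωS : S → I → O) (s0 : S) :
    (∀ (i : Fin k) (π : List I), dAfter δM q0 π = qr i →
        ωS (dAfter δS s0 π) (xr i) ∈ Zr i) ↔
    (∀ τ : List (I × O), inLang (dfsmRel δS ωS) s0 τ →
        inLang (m1'Rel δM (reqOut qr xr Zr)) q0 τ) := by
  constructor
  · intro hR τ
    suffices h : ∀ τ π, inLang (dfsmRel δS ωS) (dAfter δS s0 π) τ →
        inLang (m1'Rel δM (reqOut qr xr Zr)) (dAfter δM q0 π) τ from h τ []
    intro τ
    induction τ with
    | nil => intro _ _; trivial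
    | cons p τ ih =>
      rintro π ⟨s', ⟨hy, hs'⟩, htail⟩
      refine ⟨δM (dAfter δM q0 π) p.1, ⟨rfl, ?_⟩, ?_⟩
      · intro i hq hx
        rw [hy, ← hx]
        exact hR i π hq.symm
      · have h1 : δM (dAfter δM q0 π) p.1 = dAfter δM q0 (π ++ [p.1]) := by
          rw [dAfter_append]; rfl
        have h2 : s' = dAfter δS s0 (π ++ [p.1]) := by
          rw [dAfter_append]; exact hs'
        rw [h1]; exact ih (π ++ [p.1]) (h2 ▸ htail)
  · intro hL i π hπ
    have key : ∀ (π : List I) (x : I) (s : S) (q : Q),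
        inLang (m1'Rel δM (reqOut qr xr Zr)) q (sTrace δS ωS s (π ++ [x])) →
        ωS (dAfter δS s π) x ∈ reqOut qr xr Zr (dAfter δM q π) x := by
      intro π
      induction π with
      | nil => rintro x s q ⟨q', ⟨_, hy⟩, _⟩; exact hy
      | cons p π ih =>
        rintro x s q ⟨q', ⟨hq', _⟩, htail⟩
        subst hq'
        exact ih x (δS s p) (δM q p) htail
    have := key π (xr i) s0 q0 (hL _ (sTrace_inLang δS ωS s0 (π ++ [xr i])))
    rw [hπ] at this
    exact this i rfl rfl
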